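/- There exists a real Hilbert space H₁ and a sequence of orthogonal cylinders C_n in H₁, each having as base a 3-dimensional ball of radius r_n, such that ⋃_n C_n = H₁ but Σ_{n=1}^∞ r_n³ < ∞. Concretely: take (x_n) in a Hilbert space H with ‖x_n‖ = a_n, Σ a_n^{-3} < ∞, and 0 a weak cluster point of (x_n); set H₁ = H ⊕ H ⊕ H and C_n = {(h₁,h₂,h₃) : Σ_{j=1}^3 |⟨h_j, x_n⟩|² ≤ 1}. Then the C_n cover H₁. -/

import Mathlib

open Filter Topology

/-- `x₀` is a weak cluster point of the sequence `x`. -/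
def IsWeakClusterPt {X : Type*} [NormedAddCommGroup X] [NormedSpace ℝ X]
    (x₀ : X) (x : ℕ → X) : Prop :=
  ∀ (k : ℕ) (f : Fin k → X →L[ℝ] ℝ) (ε : ℝ), 0 < ε → ∀ N : ℕ,
    ∃ n ≥ N, ∀ i, |f i (x n) - f i x₀| < ε

lemma key_aux {c : ℕ → ℝ} (hc : Summable c) {ε : ℝ} (hε : 0 < ε) (N : ℕ) :
    ∃ n ≥ N, c n ≤ ε / (n + 1) := by
  by_contra hcon
  push_neg at hcon
  have h2 : Summable (fun n : ℕ => ε / ((n : ℝ) + 1)) := by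
    rw [← summable_nat_add_iff N]
    exact Summable.of_nonneg_of_le (fun n => by positivity)
      (fun n => (hcon (n + N) (Nat.le_add_left N n)).le)
      ((summable_nat_add_iff N).mpr hc)
  have h3 : Summable (fun n : ℕ => ((n : ℝ) + 1)⁻¹) := by
    have := h2.mul_left ε⁻¹
    convert this using 2 with n
    · rfl
    field_simp
  apply Real.not_summable_natCast_inv
  apply (summable_nat_add_iff (f := fun n : ℕ => ((n : ℝ))⁻¹) 1).mp
  convert h3 using 2 with n
  · rfl
  push_cast
  ring

lemma sqrt_sum : Summable (fun n : ℕ => (Real.sqrt ((n : ℝ) + 1))⁻¹ ^ 3) := by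
  have h := Real.summable_one_div_nat_rpow.mpr (show (1:ℝ) < 3/2 by norm_num)
  have h2 := (summable_nat_add_iff 1).mpr h
  convert h2 using 2 with n
  · rfl
  have h1 : (0:ℝ) ≤ (n : ℝ) + 1 := by positivity
  push_cast
  rw [inv_pow, ← Real.rpow_natCast (Real.sqrt ((n:ℝ)+1)) 3, Real.sqrt_eq_rpow,
    ← Real.rpow_mul h1, one_div]
  norm_num

theorem stmt8 {H : Type*} [NormedAddCommGroup H] [InnerProductSpace ℝ H]
    [CompleteSpace H] (hinf : ¬ FiniteDimensional ℝ H) :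
    ∃ x : ℕ → H, (∀ n, x n ≠ 0) ∧
      Summable (fun n => (‖x n‖⁻¹) ^ 3) ∧
      IsWeakClusterPt 0 x ∧
      ∀ h : H × H × H, ∃ n,
        (inner ℝ h.1 (x n) : ℝ) ^ 2 + (inner ℝ h.2.1 (x n) : ℝ) ^ 2 +
          (inner ℝ h.2.2 (x n) : ℝ) ^ 2 ≤ 1 := by
  obtain ⟨w, b, hb⟩ := exists_hilbertBasis ℝ H
  have hwinf : Infinite w := by
    by_contra hfin
    rw [not_infinite_iff_finite] at hfin
    have : Fintype w := Fintype.ofFinite w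
    exact hinf (Module.Finite.of_basis b.toOrthonormalBasis.toBasis)
  set emb := Infinite.natEmbedding w with hemb
  set e : ℕ → H := fun n => b (emb n) with he_def
  have he : Orthonormal ℝ e := b.orthonormal.comp emb emb.injective
  have henorm : ∀ n, ‖e n‖ = 1 := he.1
  set x : ℕ → H := fun n => Real.sqrt ((n : ℝ) + 1) • e n with hx_def
  have hsqrt_pos : ∀ n : ℕ, 0 < Real.sqrt ((n : ℝ) + 1) := fun n =>
    Real.sqrt_pos.mpr (by positivity)
  have hxnorm : ∀ n, ‖x n‖ = Real.sqrt ((n : ℝ) + 1) := by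
    intro n
    rw [hx_def]
    simp [norm_smul, henorm n, abs_of_pos (hsqrt_pos n)]
  refine ⟨x, ?_, ?_, ?_, ?_⟩
  · intro n
    apply smul_ne_zero (hsqrt_pos n).ne'
    intro hcon
    simpa [hcon] using henorm n
  · simpa only [fun n => hxnorm n] using sqrt_sum
  · intro k f ε hε N
    set g : Fin k → H := fun i => (InnerProductSpace.toDual ℝ H).symm (f i) with hg
    have hfg : ∀ i (y : H), f i y = (inner ℝ (g i) y : ℝ) := by
      intro i y
      rw [hg]
      simp [InnerProductSpace.toDual_symm_apply]
    have hc : Summable (fun n => ∑ i : Fin k, ‖(inner ℝ (e n) (g i) : ℝ)‖ ^ 2) :=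
      summable_sum fun i _ => he.inner_products_summable (g i)
    obtain ⟨n, hnN, hn⟩ := key_aux hc (show (0:ℝ) < ε^2/2 by positivity) N
    refine ⟨n, hnN, fun i => ?_⟩
    have hle : ‖(inner ℝ (e n) (g i) : ℝ)‖ ^ 2 ≤ (ε^2/2) / (n+1) :=
      le_trans (Finset.single_le_sum (f := fun i => ‖(inner ℝ (e n) (g i) : ℝ)‖ ^ 2)
        (fun j _ => by positivity) (Finset.mem_univ i)) hn
    have hfx : f i (x n) = Real.sqrt ((n:ℝ)+1) * (inner ℝ (g i) (e n) : ℝ) := by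
      rw [hfg, hx_def]
      simp [real_inner_smul_right]
    have hsq : (f i (x n))^2 < ε^2 := by
      rw [hfx, mul_pow, Real.sq_sqrt (by positivity : (0:ℝ) ≤ (n:ℝ)+1)]
      have h1 : (inner ℝ (g i) (e n) : ℝ)^2 ≤ (ε^2/2) / (n+1) := by
        rwa [real_inner_comm, ← sq_abs, ← Real.norm_eq_abs]
      have h2 : ((n:ℝ)+1) * ((ε^2/2)/(n+1)) = ε^2/2 := by field_simp
      nlinarith [hsqrt_pos n, sq_nonneg (inner ℝ (g i) (e n) : ℝ),
        mul_le_mul_of_nonneg_left h1 (by positivity : (0:ℝ) ≤ (n:ℝ)+1)]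
    simp only [map_zero, sub_zero]
    nlinarith [sq_abs (f i (x n)), abs_nonneg (f i (x n))]
  · intro h
    have hc : Summable (fun n => ‖(inner ℝ (e n) h.1 : ℝ)‖^2 + ‖(inner ℝ (e n) h.2.1 : ℝ)‖^2
        + ‖(inner ℝ (e n) h.2.2 : ℝ)‖^2) :=
      ((he.inner_products_summable h.1).add (he.inner_products_summable h.2.1)).add
        (he.inner_products_summable h.2.2)
    obtain ⟨n, -, hn⟩ := key_aux hc (show (0:ℝ) < 1 by norm_num) 0
    refine ⟨n, ?_⟩
    have hin : ∀ y : H, (inner ℝ y (x n) : ℝ)^2 = ((n:ℝ)+1) * ‖(inner ℝ (e n) y : ℝ)‖^2 := by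
      intro y
      rw [hx_def]
      simp only [real_inner_smul_right, mul_pow, Real.sq_sqrt
        (by positivity : (0:ℝ) ≤ (n:ℝ)+1), Real.norm_eq_abs, sq_abs, real_inner_comm]
    rw [hin, hin, hin, ← mul_add, ← mul_add]
    calc ((n:ℝ)+1) * (‖(inner ℝ (e n) h.1 : ℝ)‖^2 + ‖(inner ℝ (e n) h.2.1 : ℝ)‖^2
        + ‖(inner ℝ (e n) h.2.2 : ℝ)‖^2) ≤ ((n:ℝ)+1) * (1/((n:ℝ)+1)) :=
          mul_le_mul_of_nonneg_left hn (by positivity)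
      _ = 1 := by field_simp
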